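/- In the setting of the extension theorem for signed bimeasures on δ-rings, the kernels are unique ν-almost everywhere: let (X,ℬ) be standard Borel, (T,𝒜) a δ-ring with increasing cover Tₙ ↑ T, Q₀ satisfying conditions (a), (b), (c), and ν the associated supremum measure extended to σ(𝒜). If q, q₁ : T × ℬ → [−1,1] both satisfy: for every t ∈ T the map B ↦ q(t,B) (respectively q₁(t,B)) is a finite signed measure on ℬ, for every B ∈ ℬ the map t ↦ q(t,B) (respectively q₁(t,B)) is σ(𝒜)-measurable, and Q₀(A,B) = ∫_A q(t,B) ν(dt) = ∫_A q₁(t,B) ν(dt) for all A ∈ 𝒜, B ∈ ℬ, then there is a ν-null set N ∈ σ(𝒜) such that q(t,·) = q₁(t,·) as signed measures on ℬ for all t ∉ N. Moreover, if (q⁺,q⁻) and (q₁⁺,q₁⁻) are the Jordan decompositions of q(t,·) and q₁(t,·), then off a ν-null set q⁺(t,·) = q₁⁺(t,·) and q⁻(t,·) = q₁⁻(t,·). -/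

import Mathlib

open MeasureTheory Set Filter Topology

/-- A δ-ring of subsets: nonempty, closed under finite unions, set differences,
and countable intersections. -/
structure IsDeltaRing {T : Type*} (𝒜 : Set (Set T)) : Prop where
  nonempty : 𝒜.Nonempty
  union_mem : ∀ ⦃A B : Set T⦄, A ∈ 𝒜 → B ∈ 𝒜 → A ∪ B ∈ 𝒜
  diff_mem : ∀ ⦃A B : Set T⦄, A ∈ 𝒜 → B ∈ 𝒜 → A \ B ∈ 𝒜
  iInter_mem : ∀ A : ℕ → Set T, (∀ n, A n ∈ 𝒜) → (⋂ n, A n) ∈ 𝒜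

/-- A real-valued signed measure on a δ-ring `𝒜`. -/
def IsSignedMeasureOn {T : Type*} (𝒜 : Set (Set T)) (μ : Set T → ℝ) : Prop :=
  μ ∅ = 0 ∧ ∀ A : ℕ → Set T, (∀ n, A n ∈ 𝒜) → Pairwise (Function.onFun Disjoint A) →
    (⋃ n, A n) ∈ 𝒜 → HasSum (fun n => μ (A n)) (μ (⋃ n, A n))

/-- A finite (real-valued, countably additive) signed measure on the σ-algebra of a
measurable space. -/
def IsFiniteSignedMeasure {X : Type*} [MeasurableSpace X] (μ : Set X → ℝ) : Prop :=
  μ ∅ = 0 ∧ ∀ B : ℕ → Set X, (∀ n, MeasurableSet (B n)) →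
    Pairwise (Function.onFun Disjoint B) → HasSum (fun n => μ (B n)) (μ (⋃ n, B n))

/-- The set of sums `∑ i, |Q₀ (Aᵢ) (Bᵢ)|` over all finite families of pairwise disjoint
rectangles `Aᵢ × Bᵢ` with `Aᵢ ∈ 𝒜`, `Aᵢ ⊆ A`, `Bᵢ` measurable. -/
def RectSums {T X : Type*} [MeasurableSpace X] (𝒜 : Set (Set T))
    (Q₀ : Set T → Set X → ℝ) (A : Set T) : Set ℝ :=
  { r | ∃ (n : ℕ) (As : Fin n → Set T) (Bs : Fin n → Set X),
      (∀ i, As i ∈ 𝒜 ∧ As i ⊆ A ∧ MeasurableSet (Bs i)) ∧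
      (Pairwise fun i j => Disjoint (As i ×ˢ Bs i) (As j ×ˢ Bs j)) ∧
      r = ∑ i, |Q₀ (As i) (Bs i)| }


section AuxiliaryLemmas

open ENNReal

private lemma countable_generatePiSystem' {α : Type*} {S : Set (Set α)} (hS : S.Countable) :
    (generatePiSystem S).Countable := by
  have hsub : generatePiSystem S ⊆ Set.sInter '' {F : Set (Set α) | F.Finite ∧ F ⊆ S} := by
    intro t ht
    induction ht with
    | base h =>
      exact ⟨{_}, ⟨Set.finite_singleton _, by simpa using h⟩, Set.sInter_singleton _⟩
    | inter hs ht hne ihs iht =>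
      obtain ⟨F, ⟨hFfin, hFS⟩, rfl⟩ := ihs
      obtain ⟨G, ⟨hGfin, hGS⟩, rfl⟩ := iht
      exact ⟨F ∪ G, ⟨hFfin.union hGfin, Set.union_subset hFS hGS⟩,
        Set.sInter_union F G⟩
  exact ((Set.countable_setOf_finite_subset hS).image _).mono hsub

private lemma IsFiniteSignedMeasure.add_disjoint' {X : Type*} [MeasurableSpace X]
    {μ : Set X → ℝ}
    (hμ : IsFiniteSignedMeasure μ) {s t : Set X} (hs : MeasurableSet s) (ht : MeasurableSet t)
    (hd : Disjoint s t) : μ (s ∪ t) = μ s + μ t := by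
  classical
  set f : ℕ → Set X := fun n => if n = 0 then s else if n = 1 then t else ∅ with hf
  have hmeas : ∀ n, MeasurableSet (f n) := by
    intro n; simp only [hf]
    split_ifs <;> first | exact hs | exact ht | exact MeasurableSet.empty
  have hdisj : Pairwise (Function.onFun Disjoint f) := by
    intro i j hij
    unfold Function.onFun
    match i, j with
    | 0, 0 => exact absurd rfl hij
    | 0, 1 => simpa [hf] using hd
    | 1, 0 => simpa [hf] using hd.symm
    | 1, 1 => exact absurd rfl hij
    | 0, (n+2) => simp [hf]
    | 1, (n+2) => simp [hf]
    | (n+2), j => simp [hf]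
  have hUnion : (⋃ n, f n) = s ∪ t := by
    apply Set.Subset.antisymm
    · refine Set.iUnion_subset fun n => ?_
      match n with
      | 0 => exact (by simp [hf] : f 0 = s) ▸ Set.subset_union_left
      | 1 => exact (by simp [hf] : f 1 = t) ▸ Set.subset_union_right
      | (n+2) => simp [hf]
    · exact Set.union_subset
        (Set.subset_iUnion_of_subset 0 (by simp [hf]))
        (Set.subset_iUnion_of_subset 1 (by simp [hf]))
  have h1 : HasSum (fun n => μ (f n)) (μ (⋃ n, f n)) := hμ.2 f hmeas hdisj
  have h2 : HasSum (fun n => μ (f n)) (∑ n ∈ ({0, 1} : Finset ℕ), μ (f n)) := by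
    refine hasSum_sum_of_ne_finset_zero fun b hb => ?_
    have hb0 : b ≠ 0 := by simp at hb; tauto
    have hb1 : b ≠ 1 := by simp at hb; tauto
    simp [hf, hb0, hb1, hμ.1]
  have := h1.unique h2
  rw [hUnion] at this
  rw [this]
  simp [hf]

private lemma ae_eq_of_forall_setIntegral_eq_piSystem' {T : Type*} [mT : MeasurableSpace T]
    (𝒜 : Set (Set T)) (hπ : IsPiSystem 𝒜) (hgen : mT = MeasurableSpace.generateFrom 𝒜)
    (Tseq : ℕ → Set T) (hTmem : ∀ n, Tseq n ∈ 𝒜) (hTcover : ⋃ n, Tseq n = univ)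
    (ν : Measure T) [SigmaFinite ν] (hνfin : ∀ A ∈ 𝒜, ν A ≠ ⊤)
    (f g : T → ℝ) (hf : Measurable f) (hg : Measurable g)
    (hfb : ∀ t, |f t| ≤ 1) (hgb : ∀ t, |g t| ≤ 1)
    (h : ∀ A ∈ 𝒜, ∫ t in A, f t ∂ν = ∫ t in A, g t ∂ν) : f =ᵐ[ν] g := by
  have hmeas𝒜 : ∀ A ∈ 𝒜, MeasurableSet A := fun A hA =>
    hgen ▸ MeasurableSpace.measurableSet_generateFrom hA
  set F : T → ℝ≥0∞ := fun t => ENNReal.ofReal (f t + 1) with hF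
  set G : T → ℝ≥0∞ := fun t => ENNReal.ofReal (g t + 1) with hG
  have hFmeas : Measurable F := (hf.add_const 1).ennreal_ofReal
  have hGmeas : Measurable G := (hg.add_const 1).ennreal_ofReal
  have hWD : ∀ (φ : T → ℝ) (hφ : Measurable φ) (hφb : ∀ t, |φ t| ≤ 1) (A : Set T), A ∈ 𝒜 →
      (ν.withDensity fun t => ENNReal.ofReal (φ t + 1)) A
        = ENNReal.ofReal ((∫ t in A, φ t ∂ν) + (ν A).toReal) := by
    intro φ hφ hφb A hA
    have hAm := hmeas𝒜 A hA
    have : IsFiniteMeasure (ν.restrict A) :=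
      ⟨by rw [Measure.restrict_apply_univ]; exact (hνfin A hA).lt_top⟩
    have hint : Integrable (fun t => φ t + 1) (ν.restrict A) := by
      refine (integrable_const (2 : ℝ)).mono'
        ((hφ.add_const 1).aestronglyMeasurable) (ae_of_all _ fun t => ?_)
      have h1 := (abs_le.1 (hφb t)).1
      have h2 := (abs_le.1 (hφb t)).2
      rw [Real.norm_eq_abs, abs_le]
      constructor <;> linarith
    have hintφ : Integrable φ (ν.restrict A) := by
      refine (integrable_const (1 : ℝ)).mono' hφ.aestronglyMeasurable
        (ae_of_all _ fun t => by rw [Real.norm_eq_abs]; exact hφb t)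
    have hpos : 0 ≤ᵐ[ν.restrict A] fun t => φ t + 1 :=
      ae_of_all _ fun t => by
        simpa using (by linarith [(abs_le.1 (hφb t)).1] : (0:ℝ) ≤ φ t + 1)
    rw [withDensity_apply _ hAm,
      ← ofReal_integral_eq_lintegral_ofReal hint hpos,
      integral_add hintφ (integrable_const 1), integral_const, smul_eq_mul, mul_one,
      measureReal_restrict_apply_univ, measureReal_def]
  have heq : ν.withDensity F = ν.withDensity G := by
    refine Measure.ext_of_generateFrom_of_iUnion 𝒜 Tseq hgen hπ hTcover hTmem (fun n => ?_)
      (fun A hA => ?_)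
    · rw [hWD f hf hfb _ (hTmem n)]
      exact ENNReal.ofReal_ne_top
    · rw [hWD f hf hfb A hA, hWD g hg hgb A hA, h A hA]
  have hFG : F =ᵐ[ν] G := by
    refine ae_eq_of_forall_setLIntegral_eq_of_sigmaFinite hFmeas hGmeas fun s hs _ => ?_
    rw [← withDensity_apply F hs (μ := ν), ← withDensity_apply G hs (μ := ν), heq]
  filter_upwards [hFG] with t ht
  have h1 : (0:ℝ) ≤ f t + 1 := by linarith [(abs_le.1 (hfb t)).1]
  have h2 : (0:ℝ) ≤ g t + 1 := by linarith [(abs_le.1 (hgb t)).1]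
  have := (ENNReal.ofReal_eq_ofReal_iff h1 h2).1 ht
  linarith

end AuxiliaryLemmas

/-- Uniqueness (ν-a.e.) of the kernels in the extension theorem for
signed bimeasures on δ-rings: if `q` and `q₁` are `[-1,1]`-valued kernels, countably
additive and finite in the second variable, σ(𝒜)-measurable in the first, both
representing `Q₀` via `Q₀(A,B) = ∫_A q(t,B) ν(dt)`, then `q(t,·) = q₁(t,·)` off a
ν-null set; and the respective Jordan decompositions also agree off a ν-null set. -/
theorem kernels_unique_ae {T X : Type*} [Nonempty T]
    [mT : MeasurableSpace T] [MeasurableSpace X] [StandardBorelSpace X]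
    (𝒜 : Set (Set T)) (h𝒜 : IsDeltaRing 𝒜)
    (hmT : mT = MeasurableSpace.generateFrom 𝒜)
    (Tseq : ℕ → Set T) (hTmem : ∀ n, Tseq n ∈ 𝒜) (hTmono : Monotone Tseq)
    (hTcover : ⋃ n, Tseq n = univ)
    (Q₀ : Set T → Set X → ℝ)
    (ha : ∀ A ∈ 𝒜, IsFiniteSignedMeasure (Q₀ A))
    (hb : ∀ B : Set X, MeasurableSet B → IsSignedMeasureOn 𝒜 fun A => Q₀ A B)
    (hc : ∀ A ∈ 𝒜, BddAbove (RectSums 𝒜 Q₀ A))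
    (ν : Measure T) (hν : ∀ A ∈ 𝒜, ν A = ENNReal.ofReal (sSup (RectSums 𝒜 Q₀ A)))
    (q q₁ : T → Set X → ℝ)
    (hqbdd : ∀ t B, |q t B| ≤ 1) (hq₁bdd : ∀ t B, |q₁ t B| ≤ 1)
    (hqsm : ∀ t, IsFiniteSignedMeasure (q t)) (hq₁sm : ∀ t, IsFiniteSignedMeasure (q₁ t))
    (hqmeas : ∀ B : Set X, MeasurableSet B → Measurable fun t => q t B)
    (hq₁meas : ∀ B : Set X, MeasurableSet B → Measurable fun t => q₁ t B)
    (hqrep : ∀ A ∈ 𝒜, ∀ B : Set X, MeasurableSet B → Q₀ A B = ∫ t in A, q t B ∂ν)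
    (hq₁rep : ∀ A ∈ 𝒜, ∀ B : Set X, MeasurableSet B → Q₀ A B = ∫ t in A, q₁ t B ∂ν) :
    (∃ N : Set T, MeasurableSet N ∧ ν N = 0 ∧
      ∀ t ∉ N, ∀ B : Set X, MeasurableSet B → q t B = q₁ t B) ∧
    (∀ qp qm q₁p q₁m : T → Measure X,
      (∀ t, IsFiniteMeasure (qp t)) → (∀ t, IsFiniteMeasure (qm t)) →
      (∀ t, IsFiniteMeasure (q₁p t)) → (∀ t, IsFiniteMeasure (q₁m t)) →
      (∀ t, (qp t).MutuallySingular (qm t)) → (∀ t, (q₁p t).MutuallySingular (q₁m t)) →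
      (∀ t, ∀ B : Set X, MeasurableSet B → q t B = (qp t B).toReal - (qm t B).toReal) →
      (∀ t, ∀ B : Set X, MeasurableSet B → q₁ t B = (q₁p t B).toReal - (q₁m t B).toReal) →
      ∃ N : Set T, MeasurableSet N ∧ ν N = 0 ∧
        ∀ t ∉ N, qp t = q₁p t ∧ qm t = q₁m t) := by
  classical
  have hmeas𝒜 : ∀ A ∈ 𝒜, MeasurableSet A := fun A hA =>
    hmT ▸ MeasurableSpace.measurableSet_generateFrom hA
  have hνfin : ∀ A ∈ 𝒜, ν A ≠ ⊤ := fun A hA => by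
    rw [hν A hA]; exact ENNReal.ofReal_ne_top
  have hinter : ∀ A ∈ 𝒜, ∀ B ∈ 𝒜, A ∩ B ∈ 𝒜 := by
    intro A hA B hB
    have hseq : (⋂ n, if n = 0 then A else B) = A ∩ B := by
      apply Set.Subset.antisymm
      · exact Set.subset_inter (Set.iInter_subset_of_subset 0 (by simp))
          (Set.iInter_subset_of_subset 1 (by simp))
      · intro x hx
        simp only [Set.mem_iInter]
        intro n
        split_ifs
        exacts [hx.1, hx.2]
    have h := h𝒜.iInter_mem (fun n => if n = 0 then A else B)
      (fun n => by split_ifs <;> assumption)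
    rwa [hseq] at h
  have hπ : IsPiSystem 𝒜 := fun A hA B hB _ => hinter A hA B hB
  haveI : SigmaFinite ν :=
    ⟨⟨⟨Tseq, fun _ => trivial, fun n => (hνfin _ (hTmem n)).lt_top, hTcover⟩⟩⟩
  -- countable π-system on X containing univ and generating the σ-algebra
  set S : Set (Set X) :=
    insert univ (generatePiSystem (MeasurableSpace.countableGeneratingSet X)) with hSdef
  have hScount : S.Countable :=
    (countable_generatePiSystem'
      (MeasurableSpace.countable_countableGeneratingSet)).insert _
  have hSmeas : ∀ B ∈ S, MeasurableSet B := by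
    rintro B (rfl | hB)
    · exact MeasurableSet.univ
    · exact generatePiSystem_measurableSet
        (fun s hs => MeasurableSpace.measurableSet_countableGeneratingSet hs) _ hB
  have hSpi : IsPiSystem S := by
    rintro s (rfl | hs) t (rfl | ht) hne
    · rw [Set.univ_inter]; exact Set.mem_insert _ _
    · rw [Set.univ_inter]; exact Set.mem_insert_of_mem _ ht
    · rw [Set.inter_univ]; exact Set.mem_insert_of_mem _ hs
    · exact Set.mem_insert_of_mem _ (generatePiSystem.inter hs ht hne)
  have hSgen : ‹MeasurableSpace X› = MeasurableSpace.generateFrom S := by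
    rw [hSdef, MeasurableSpace.generateFrom_insert_univ, generateFrom_generatePiSystem_eq,
      MeasurableSpace.generateFrom_countableGeneratingSet]
  -- a.e. equality for a fixed measurable B
  have key : ∀ B : Set X, MeasurableSet B →
      (fun t => q t B) =ᵐ[ν] fun t => q₁ t B := by
    intro B hB
    refine ae_eq_of_forall_setIntegral_eq_piSystem' 𝒜 hπ hmT Tseq hTmem hTcover ν hνfin
      _ _ (hqmeas B hB) (hq₁meas B hB) (fun t => hqbdd t B) (fun t => hq₁bdd t B)
      (fun A hA => ?_)
    rw [← hqrep A hA B hB, hq₁rep A hA B hB]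
  -- the global null set
  set N : Set T := ⋃ B ∈ S, {t | q t B ≠ q₁ t B} with hNdef
  have hNmeas : MeasurableSet N := by
    refine MeasurableSet.biUnion hScount fun B hB => ?_
    exact (measurableSet_eq_fun (hqmeas B (hSmeas B hB)) (hq₁meas B (hSmeas B hB))).compl
  have hN0 : ν N = 0 := by
    rw [hNdef, measure_biUnion_null_iff hScount]
    intro B hB
    have := key B (hSmeas B hB)
    rw [Filter.EventuallyEq, ae_iff] at this
    exact this
  have hmain : ∀ t ∉ N, ∀ B : Set X, MeasurableSet B → q t B = q₁ t B := by
    intro t ht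
    have hbase : ∀ B ∈ S, q t B = q₁ t B := by
      intro B hB
      by_contra hne
      exact ht (Set.mem_biUnion hB hne)
    have huniv : q t univ = q₁ t univ := hbase univ (Set.mem_insert _ _)
    refine MeasurableSpace.induction_on_inter hSgen hSpi ?_ hbase ?_ ?_
    · rw [(hqsm t).1, (hq₁sm t).1]
    · intro s hs ihs
      have h1 : q t (s ∪ sᶜ) = q t s + q t sᶜ :=
        IsFiniteSignedMeasure.add_disjoint' (hqsm t) hs hs.compl disjoint_compl_right
      have h2 : q₁ t (s ∪ sᶜ) = q₁ t s + q₁ t sᶜ :=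
        IsFiniteSignedMeasure.add_disjoint' (hq₁sm t) hs hs.compl disjoint_compl_right
      rw [Set.union_compl_self] at h1 h2
      rw [huniv, h2] at h1
      linarith
    · intro f hfd hfm ihf
      have h1 : HasSum (fun n => q t (f n)) (q t (⋃ n, f n)) := (hqsm t).2 f hfm hfd
      have h2 : HasSum (fun n => q₁ t (f n)) (q₁ t (⋃ n, f n)) := (hq₁sm t).2 f hfm hfd
      have hfeq : (fun n => q t (f n)) = fun n => q₁ t (f n) := funext fun n => ihf n
      rw [hfeq] at h1
      exact h1.unique h2
  refine ⟨⟨N, hNmeas, hN0, hmain⟩, ?_⟩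
  intro qp qm q₁p q₁m hfp hfm hf1p hf1m hsing hsing₁ hdec hdec₁
  refine ⟨N, hNmeas, hN0, fun t ht => ?_⟩
  haveI := hfp t; haveI := hfm t; haveI := hf1p t; haveI := hf1m t
  let j : MeasureTheory.JordanDecomposition X := ⟨qp t, qm t, hsing t⟩
  let j₁ : MeasureTheory.JordanDecomposition X := ⟨q₁p t, q₁m t, hsing₁ t⟩
  have hjeq : j.toSignedMeasure = j₁.toSignedMeasure := by
    refine MeasureTheory.VectorMeasure.ext fun B hB => ?_
    show ((qp t).toSignedMeasure - (qm t).toSignedMeasure) B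
      = ((q₁p t).toSignedMeasure - (q₁m t).toSignedMeasure) B
    rw [Measure.toSignedMeasure_sub_apply hB, Measure.toSignedMeasure_sub_apply hB,
      measureReal_def, measureReal_def, measureReal_def, measureReal_def,
      ← hdec t B hB, ← hdec₁ t B hB]
    exact hmain t ht B hB
  have hj := MeasureTheory.JordanDecomposition.toSignedMeasure_injective hjeq
  exact ⟨congrArg MeasureTheory.JordanDecomposition.posPart hj,
    congrArg MeasureTheory.JordanDecomposition.negPart hj⟩
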